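/- Let f : ℂ → ℂ be an entire transcendental function, let z0 be a repelling or parabolic fixed point of f, and let U be an admissible expansion domain of f at z0. Then for every leg γ there exists exactly one leg β such that f(β(t)) = γ(t) for all t ∈ [0,∞). (Thus the leg map 𝓛, sending each leg to its unique pullback ending at z0, is well defined.) -/

import Mathlib

open Complex Set Filter Topology

noncomputable section

/-- `f` is an entire transcendental function: holomorphic on all of `ℂ` and not a polynomial. -/
def EntireTranscendental (f : ℂ → ℂ) : Prop :=
  Differentiable ℂ f ∧ ¬ ∃ p : Polynomial ℂ, ∀ z : ℂ, f z = p.eval z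

/-- `w` is a critical value of `f`. -/
def IsCriticalValue (f : ℂ → ℂ) (w : ℂ) : Prop :=
  ∃ c : ℂ, deriv f c = 0 ∧ f c = w

/-- `a` is an asymptotic value of `f`. -/
def IsAsymptoticValue (f : ℂ → ℂ) (a : ℂ) : Prop :=
  ∃ γ : ℝ → ℂ, ContinuousOn γ (Ici 0) ∧
    Tendsto (fun t => ‖γ t‖) atTop atTop ∧
    Tendsto (fun t => f (γ t)) atTop (nhds a)

/-- The set of singular values `S(f)`. -/
def singularValues (f : ℂ → ℂ) : Set ℂ :=
  closure ({w | IsCriticalValue f w} ∪ {a | IsAsymptoticValue f a})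

/-- The postsingular set `P(f)`. -/
def postsingularSet (f : ℂ → ℂ) : Set ℂ :=
  closure (⋃ n : ℕ, f^[n] '' singularValues f)

/-- `f` has finite order of growth. -/
def FiniteOrder (f : ℂ → ℂ) : Prop :=
  ∃ C R : ℝ, 0 < C ∧ 0 < R ∧ ∀ z : ℂ, R ≤ ‖z‖ →
    ‖f z‖ ≤ Real.exp (‖z‖ ^ C)

/-- `z` is a repelling or parabolic periodic point of `f`. -/
def RepellingOrParabolicPeriodicPt (f : ℂ → ℂ) (z : ℂ) : Prop :=
  ∃ n : ℕ, 1 ≤ n ∧ f^[n] z = z ∧ (∀ m : ℕ, 1 ≤ m → m < n → f^[m] z ≠ z) ∧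
    (1 < ‖deriv (f^[n]) z‖ ∨ ∃ k : ℕ, 1 ≤ k ∧ (deriv (f^[n]) z) ^ k = 1)

/-- `g : (0,∞) → ℂ` is a periodic ray of `f`. -/
def IsPeriodicRay (f : ℂ → ℂ) (g : ℝ → ℂ) : Prop :=
  InjOn g (Ioi 0) ∧ ContinuousOn g (Ioi 0) ∧
  Tendsto (fun t => ‖g t‖) atTop atTop ∧
  ∃ n : ℕ, 1 ≤ n ∧ ∀ t : ℝ, 0 < t → g (2 * t) = f^[n] (g t)

/-- The curve `g` lands at `z0`. -/
def LandsAt (g : ℝ → ℂ) (z0 : ℂ) : Prop :=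
  Tendsto g (nhdsWithin 0 (Ioi 0)) (nhds z0)

/-- `z0` is a repelling or parabolic fixed point of `f`. -/
def RepellingOrParabolicFixedPt (f : ℂ → ℂ) (z0 : ℂ) : Prop :=
  f z0 = z0 ∧ (1 < ‖deriv f z0‖ ∨ ∃ k : ℕ, 1 ≤ k ∧ (deriv f z0) ^ k = 1)

/-- `U` is an admissible expansion domain of `f` at the fixed point `z0`. -/
def IsAdmissibleExpansionDomain (f : ℂ → ℂ) (z0 : ℂ) (U : Set ℂ) : Prop :=
  IsOpen U ∧ IsConnected U ∧
  -- (a): U avoids P(f) and z0, and ∞ is an isolated boundary point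
  U ⊆ (postsingularSet f ∪ {z0})ᶜ ∧
  (∃ R : ℝ, 0 < R ∧ ∀ z : ℂ, R < ‖z‖ → z ∈ U) ∧
  -- (b): strict backward invariance
  f ⁻¹' U ⊂ U ∧
  -- (c): finitely many complementary components, and U ≠ ℂ ∖ P(f)
  {C : Set ℂ | ∃ z : ℂ, z ∉ U ∧ C = connectedComponentIn Uᶜ z}.Finite ∧
  U ≠ (postsingularSet f)ᶜ ∧
  -- (d): z0 is an accessible boundary point, and K0 ∖ {z0} has finitely many components
  z0 ∈ frontier U ∧
  (∃ α : ℝ → ℂ, ContinuousOn α (Icc 0 1) ∧ (∀ t ∈ Ico (0:ℝ) 1, α t ∈ U) ∧ α 1 = z0) ∧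
  {C : Set ℂ | ∃ z : ℂ, z ∈ connectedComponentIn Uᶜ z0 \ {z0} ∧
      C = connectedComponentIn (connectedComponentIn Uᶜ z0 \ {z0}) z}.Finite

/-- A leg: an injective curve from `z0` to `∞` through `U`. -/
def IsLeg (z0 : ℂ) (U : Set ℂ) (γ : ℝ → ℂ) : Prop :=
  ContinuousOn γ (Ici 0) ∧ InjOn γ (Ici 0) ∧ γ 0 = z0 ∧
  (∀ t : ℝ, 0 < t → γ t ∈ U) ∧ Tendsto (fun t => ‖γ t‖) atTop atTop

/-- Two legs are equivalent if they are homotopic in `U` relative to `{z0, ∞}`. -/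
def LegEquiv (z0 : ℂ) (U : Set ℂ) (γ1 γ2 : ℝ → ℂ) : Prop :=
  ∃ H : ℝ × ℝ → ℂ, ContinuousOn H (Icc 0 1 ×ˢ Ici 0) ∧
    (∀ t ∈ Ici (0:ℝ), H (0, t) = γ1 t ∧ H (1, t) = γ2 t) ∧
    (∀ s ∈ Icc (0:ℝ) 1, H (s, 0) = z0) ∧
    (∀ s ∈ Icc (0:ℝ) 1, ∀ t : ℝ, 0 < t → H (s, t) ∈ U) ∧
    (∀ M : ℝ, ∃ T : ℝ, ∀ t : ℝ, T ≤ t → ∀ s ∈ Icc (0:ℝ) 1, M ≤ ‖H (s, t)‖)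

lemma exists_partialHomeo {f : ℂ → ℂ} (hf : Differentiable ℂ f) {w : ℂ}
    (hw : deriv f w ≠ 0) :
    ∃ e : OpenPartialHomeomorph ℂ ℂ, w ∈ e.source ∧ ∀ x, e x = f x := by
  have ha : AnalyticAt ℂ f w := hf.analyticAt w
  have hs : HasStrictDerivAt f (deriv f w) w := by
    have := ha.hasStrictFDerivAt.hasStrictDerivAt
    simpa [fderiv_apply_one_eq_deriv] using this
  have hE := hs.hasStrictFDerivAt_equiv hw
  exact ⟨hE.toOpenPartialHomeomorph f, hE.mem_toOpenPartialHomeomorph_source,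
    fun x => by rw [hE.toOpenPartialHomeomorph_coe]⟩

lemma exists_injOn_ball {f : ℂ → ℂ} (hf : Differentiable ℂ f) {w : ℂ}
    (hw : deriv f w ≠ 0) :
    ∃ r > 0, InjOn f (Metric.ball w r) := by
  obtain ⟨e, hws, hef⟩ := exists_partialHomeo hf hw
  obtain ⟨r, hr, hball⟩ := Metric.isOpen_iff.1 e.open_source w hws
  refine ⟨r, hr, fun x hx y hy hxy => e.injOn (hball hx) (hball hy) ?_⟩
  simp [hef, hxy]

lemma lift_unique {f : ℂ → ℂ} (hf : Differentiable ℂ f) {γ b1 b2 : ℝ → ℂ} {D : Set ℝ}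
    (hD : IsPreconnected D) (h1 : ContinuousOn b1 D) (h2 : ContinuousOn b2 D)
    (e1 : ∀ t ∈ D, f (b1 t) = γ t) (e2 : ∀ t ∈ D, f (b2 t) = γ t)
    (hnc : ∀ t ∈ D, deriv f (b1 t) ≠ 0)
    {t0 : ℝ} (ht0 : t0 ∈ D) (h0 : b1 t0 = b2 t0) :
    ∀ t ∈ D, b1 t = b2 t := by
  haveI : PreconnectedSpace D := Subtype.preconnectedSpace hD
  set S : Set D := {x : D | b1 x = b2 x} with hS
  have hc1 : Continuous (D.restrict b1) := h1.restrict
  have hc2 : Continuous (D.restrict b2) := h2.restrict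
  have hclosed : IsClosed S := isClosed_eq hc1 hc2
  have hopen : IsOpen S := by
    rw [isOpen_iff_mem_nhds]
    rintro x hx
    have hd : deriv f (b1 x) ≠ 0 := hnc x x.2
    obtain ⟨r, hr, hinj⟩ := exists_injOn_ball hf hd
    have hV1 : (D.restrict b1) ⁻¹' Metric.ball (b1 x) r ∈ 𝓝 x :=
      hc1.continuousAt.preimage_mem_nhds (Metric.ball_mem_nhds _ hr)
    have hV2 : (D.restrict b2) ⁻¹' Metric.ball (b1 x) r ∈ 𝓝 x := by
      apply hc2.continuousAt.preimage_mem_nhds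
      rw [show b1 x = b2 x from hx]  at *
      exact Metric.ball_mem_nhds _ hr
    filter_upwards [hV1, hV2] with y hy1 hy2
    have : f (b1 y) = f (b2 y) := by rw [e1 y y.2, e2 y y.2]
    exact hinj hy1 hy2 this
  have : S = univ := IsClopen.eq_univ ⟨hclosed, hopen⟩ ⟨⟨t0, ht0⟩, h0⟩
  intro t ht
  exact (this ▸ (mem_univ (⟨t, ht⟩ : D)) : (⟨t, ht⟩ : D) ∈ S)

lemma deriv_ne_on_lift {f : ℂ → ℂ} {γ : ℝ → ℂ} {z0 : ℂ}
    (hz0d : deriv f z0 ≠ 0) (hnc : ∀ w t, 0 < t → f w = γ t → deriv f w ≠ 0)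
    {s : ℝ} {b : ℝ → ℂ} (hb0 : b 0 = z0)
    (hlift : ∀ t ∈ Icc 0 s, f (b t) = γ t) : ∀ t ∈ Icc 0 s, deriv f (b t) ≠ 0 := by
  intro t ht
  rcases eq_or_lt_of_le ht.1 with h | h
  · rw [← h, hb0]; exact hz0d
  · exact hnc _ t h (hlift t ht)

lemma lift_extend' {f : ℂ → ℂ} {γ : ℝ → ℂ} (hf : Differentiable ℂ f)
    (hγc : ContinuousOn γ (Ici 0)) {T : ℝ} (hT : 0 ≤ T) {b : ℝ → ℂ}
    (hb : ContinuousOn b (Icc 0 T)) (hlift : ∀ t ∈ Icc 0 T, f (b t) = γ t)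
    (hd : deriv f (b T) ≠ 0) :
    ∃ δ > 0, ∃ b' : ℝ → ℂ, ContinuousOn b' (Icc 0 (T + δ)) ∧
      (∀ t ∈ Icc 0 T, b' t = b t) ∧ ∀ t ∈ Icc 0 (T + δ), f (b' t) = γ t := by
  obtain ⟨e, hws, hef⟩ := exists_partialHomeo hf hd
  have hfbT : f (b T) = γ T := hlift T ⟨hT, le_refl T⟩
  have htarget : γ T ∈ e.target := by
    rw [← hfbT, ← hef]; exact e.map_source hws
  -- find δ with γ (Icc T (T+δ)) ⊆ e.target
  have hcwa : ContinuousWithinAt γ (Ici 0) T := hγc T hT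
  have hmem : γ ⁻¹' e.target ∈ 𝓝[Ici 0] T :=
    hcwa (e.open_target.mem_nhds htarget)
  obtain ⟨δ0, hδ0, hball⟩ := Metric.mem_nhdsWithin_iff.1 hmem
  set δ := δ0 / 2 with hδdef
  have hδ : 0 < δ := by positivity
  have hsubt : ∀ t ∈ Icc T (T + δ), γ t ∈ e.target := by
    intro t ht
    apply hball
    constructor
    · rw [Metric.mem_ball, Real.dist_eq, abs_sub_lt_iff]
      constructor <;> [skip; skip] <;>
      · cases' ht with h1 h2; linarith
    · exact le_trans hT ht.1
  set g1 : ℝ → ℂ := fun t => b (min t T) with hg1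
  set g2 : ℝ → ℂ := fun t => e.symm (γ (max t T)) with hg2
  have hg1c : ContinuousOn g1 (Icc 0 (T + δ)) := by
    apply hb.comp ((continuous_id.min continuous_const).continuousOn)
    intro t ht
    exact ⟨le_min ht.1 hT, min_le_right _ _⟩
  have hg2c : ContinuousOn g2 (Icc 0 (T + δ)) := by
    apply e.continuousOn_symm.comp
    · apply hγc.comp ((continuous_id.max continuous_const).continuousOn)
      intro t ht
      exact le_trans hT (le_max_right _ _)
    · intro t ht
      exact hsubt _ ⟨le_max_right _ _, max_le (ht.2) (by linarith)⟩
  have heqT : g1 T = g2 T := by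
    have h1 : g1 T = b T := by simp [hg1]
    have h2 : g2 T = b T := by
      have : e.symm (γ T) = b T := by
        rw [← hfbT, ← hef]; exact e.left_inv hws
      simp [hg2, this]
    rw [h1, h2]
  refine ⟨δ, hδ, fun t => if t ≤ T then g1 t else g2 t, ?_, ?_, ?_⟩
  · apply ContinuousOn.if
    · intro a ha
      have h2 := ha.2
      have hEq : {a : ℝ | a ≤ T} = Iic T := rfl
      rw [hEq, frontier_Iic, mem_singleton_iff] at h2
      subst h2
      exact heqT
    · exact hg1c.mono inter_subset_left
    · exact hg2c.mono inter_subset_left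
  · intro t ht
    simp only [if_pos ht.2, hg1, min_eq_left ht.2]
  · intro t ht
    by_cases h : t ≤ T
    · simp only [if_pos h, hg1, min_eq_left h]
      exact hlift t ⟨ht.1, h⟩
    · push_neg at h
      simp only [if_neg (not_le.2 h), hg2, max_eq_left (le_of_lt h)]
      rw [← hef]
      exact e.right_inv (hsubt t ⟨le_of_lt h, ht.2⟩)

lemma seq_of_frequently {T : ℝ} {p : ℝ → Prop}
    (hp : ∃ᶠ t in 𝓝[Ico 0 T] T, p t) :
    ∃ u : ℕ → ℝ, (∀ n, u n ∈ Ico 0 T ∧ p (u n)) ∧ Tendsto u atTop (𝓝 T) := by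
  have key : ∀ n : ℕ, ∃ t, t ∈ Ico 0 T ∧ p t ∧ dist t T < 1/(n+1) := by
    intro n
    have hev : ∀ᶠ t in 𝓝[Ico 0 T] T, t ∈ Ico 0 T ∧ dist t T < 1/(n+1) := by
      have h1 : ∀ᶠ t in 𝓝[Ico 0 T] T, t ∈ Ico 0 T := self_mem_nhdsWithin
      have h2 : ∀ᶠ t in 𝓝[Ico 0 T] T, dist t T < 1/(n+1) := by
        apply eventually_nhdsWithin_of_eventually_nhds
        have : (0:ℝ) < 1/(n+1) := by positivity
        filter_upwards [Metric.ball_mem_nhds T this] with x hx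
        simpa [Metric.mem_ball] using hx
      exact h1.and h2
    obtain ⟨t, ht⟩ := (hp.and_eventually hev).exists
    exact ⟨t, ht.2.1, ht.1, ht.2.2⟩
  choose u hu1 hu2 hu3 using key
  refine ⟨u, fun n => ⟨hu1 n, hu2 n⟩, ?_⟩
  rw [tendsto_iff_dist_tendsto_zero]
  apply squeeze_zero (fun n => dist_nonneg) (fun n => le_of_lt (hu3 n))
  exact tendsto_one_div_add_atTop_nhds_zero_nat

lemma lift_limit {f : ℂ → ℂ} {γ : ℝ → ℂ} {z0 : ℂ} (hf : Differentiable ℂ f)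
    (hγc : ContinuousOn γ (Ici 0))
    (hz0d : deriv f z0 ≠ 0)
    (hnc : ∀ w t, 0 < t → f w = γ t → deriv f w ≠ 0)
    (hnoasym : ∀ t, 0 < t → ¬ IsAsymptoticValue f (γ t))
    {T : ℝ} (hT : 0 < T)
    (hall : ∀ s, 0 ≤ s → s < T →
      ∃ b, ContinuousOn b (Icc 0 s) ∧ b 0 = z0 ∧ ∀ t ∈ Icc 0 s, f (b t) = γ t) :
    ∃ b, ContinuousOn b (Icc 0 T) ∧ b 0 = z0 ∧ ∀ t ∈ Icc 0 T, f (b t) = γ t := by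
  classical
  -- choose a total family of partial lifts
  have hall' : ∀ s : ℝ, ∃ b : ℝ → ℂ, (0 ≤ s ∧ s < T) →
      ContinuousOn b (Icc 0 s) ∧ b 0 = z0 ∧ ∀ t ∈ Icc 0 s, f (b t) = γ t := by
    intro s
    by_cases h : 0 ≤ s ∧ s < T
    · obtain ⟨b, hb⟩ := hall s h.1 h.2
      exact ⟨b, fun _ => hb⟩
    · exact ⟨fun _ => z0, fun hc => absurd hc h⟩
  choose L hL using hall'
  -- coherence of the family
  have hcoh : ∀ s s' : ℝ, 0 ≤ s → s ≤ s' → s' < T → ∀ t ∈ Icc 0 s, L s' t = L s t := by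
    intro s s' hs hss' hs'T t ht
    have h1 := hL s ⟨hs, lt_of_le_of_lt hss' hs'T⟩
    have h2 := hL s' ⟨le_trans hs hss', hs'T⟩
    exact lift_unique hf isPreconnected_Icc
      (h2.1.mono (Icc_subset_Icc_right hss')) h1.1
      (fun u hu => h2.2.2 u (Icc_subset_Icc_right hss' hu)) h1.2.2
      (deriv_ne_on_lift hz0d hnc h2.2.1
        (fun v hv => h2.2.2 v (Icc_subset_Icc_right hss' hv)))
      (show (0:ℝ) ∈ Icc 0 s from ⟨le_refl 0, hs⟩) (by rw [h1.2.1, h2.2.1]) t ht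
  set B : ℝ → ℂ := fun t => L t t with hBdef
  have hBlift : ∀ t, 0 ≤ t → t < T → f (B t) = γ t := fun t h1 h2 =>
    (hL t ⟨h1, h2⟩).2.2 t ⟨h1, le_refl t⟩
  have hB0 : B 0 = z0 := (hL 0 ⟨le_refl 0, hT⟩).2.1
  have hBeq : ∀ s, 0 ≤ s → s < T → ∀ t ∈ Icc 0 s, B t = L s t := by
    intro s hs hsT t ht
    exact (hcoh t s ht.1 ht.2 hsT t ⟨ht.1, le_refl t⟩).symm
  have hBc : ContinuousOn B (Ico 0 T) := by
    intro t0 ht0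
    set s := (t0 + T)/2 with hsdef
    have hts : t0 < s := by rw [hsdef]; cases' ht0 with h1 h2; linarith
    have hsT : s < T := by rw [hsdef]; cases' ht0 with h1 h2; linarith
    have hs0 : 0 ≤ s := le_trans ht0.1 (le_of_lt hts)
    have hmem' : Icc 0 s ∈ 𝓝[Ico 0 T] t0 := by
      apply mem_nhdsWithin.2 ⟨Iio s, isOpen_Iio, hts, ?_⟩
      rintro u ⟨hu1, hu2⟩
      exact ⟨hu2.1, le_of_lt hu1⟩
    have hLc : ContinuousWithinAt (L s) (Ico 0 T) t0 :=
      (((hL s ⟨hs0, hsT⟩).1 t0 ⟨ht0.1, le_of_lt hts⟩).mono_of_mem_nhdsWithin hmem')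
    apply hLc.congr_of_eventuallyEq ?_ ?_
    · filter_upwards [hmem'] with u hu
      exact hBeq s hs0 hsT u hu
    · exact hBeq s hs0 hsT t0 ⟨ht0.1, le_of_lt hts⟩
  by_cases hesc : Tendsto (fun t => ‖B t‖) (𝓝[Ico 0 T] T) atTop
  · -- escape to infinity: produces a forbidden asymptotic value
    exfalso
    apply hnoasym T hT
    set c : ℝ := 2 / T with hcdef
    have hc : 0 < c := by positivity
    set φ : ℝ → ℝ := fun s => T - 1 / (s + c) with hφdef
    have hφmem : ∀ s : ℝ, 0 ≤ s → φ s ∈ Ico 0 T := by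
      intro s hs
      have hpos : 0 < s + c := by linarith
      have h1 : 1 / (s + c) ≤ 1 / c := one_div_le_one_div_of_le hc (by linarith)
      have h2 : 1 / c = T / 2 := by rw [hcdef]; field_simp
      have h3 : 0 < 1 / (s + c) := by positivity
      constructor
      · rw [hφdef]; simp only; rw [h2] at h1; linarith
      · rw [hφdef]; simp only; linarith
    have hφc : ContinuousOn φ (Ici 0) := by
      apply continuousOn_const.sub
      apply continuousOn_const.div (continuous_id.add continuous_const).continuousOn
      intro s hs
      have : (0:ℝ) ≤ s := hs
      intro hzero
      simp only [Pi.add_apply, id] at hzero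
      linarith
    have hφt : Tendsto φ atTop (𝓝[Ico 0 T] T) := by
      rw [tendsto_nhdsWithin_iff]
      constructor
      · have h0 : Tendsto (fun s : ℝ => 1 / (s + c)) atTop (𝓝 0) := by
          simp only [one_div]
          exact (tendsto_atTop_add_const_right atTop c tendsto_id).inv_tendsto_atTop
        have := tendsto_const_nhds.sub h0 (f := fun _ : ℝ => T)
        simpa [hφdef, one_div] using this
      · filter_upwards [eventually_ge_atTop (0:ℝ)] with s hs
        exact hφmem s hs
    refine ⟨fun s => B (φ s), ?_, ?_, ?_⟩
    · apply hBc.comp hφc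
      intro s hs
      exact hφmem s hs
    · exact hesc.comp hφt
    · have h2 : Tendsto (fun s => γ (φ s)) atTop (𝓝 (γ T)) := by
        apply (hγc T (le_of_lt hT)).tendsto.comp
        exact hφt.mono_right (nhdsWithin_mono T (fun x hx => hx.1))
      apply h2.congr'
      filter_upwards [eventually_ge_atTop (0:ℝ)] with s hs
      exact (hBlift (φ s) (hφmem s hs).1 (hφmem s hs).2).symm
  · -- bounded case: extract a limit point and extend the lift to T
    obtain ⟨M, hMfreq⟩ : ∃ M : ℝ, ∃ᶠ x in 𝓝[Ico 0 T] T, ‖B x‖ < M := by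
      rw [tendsto_atTop] at hesc
      push_neg at hesc
      obtain ⟨M, hM⟩ := hesc
      refine ⟨M, ?_⟩
      simp only [← not_le] at hM
      apply hM.mono
      intro x hx
      exact not_le.1 hx
    obtain ⟨t, ht, httend⟩ := seq_of_frequently hMfreq
    have hmemball : ∀ n, B (t n) ∈ Metric.closedBall (0:ℂ) M := by
      intro n
      rw [Metric.mem_closedBall, dist_zero_right]
      exact le_of_lt (ht n).2
    obtain ⟨w, hw, ψ, hψ, hconv⟩ := (isCompact_closedBall (0:ℂ) M).tendsto_subseq hmemball
    have htendIci : ∀ (v : ℕ → ℝ), (∀ n, v n ∈ Ico 0 T) → Tendsto v atTop (𝓝 T) →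
        Tendsto (fun n => γ (v n)) atTop (𝓝 (γ T)) := by
      intro v hv hvt
      apply (hγc T (le_of_lt hT)).tendsto.comp
      rw [tendsto_nhdsWithin_iff]
      exact ⟨hvt, Eventually.of_forall fun n => (hv n).1⟩
    have hflim : ∀ (v : ℕ → ℝ) (w' : ℂ), (∀ n, v n ∈ Ico 0 T) → Tendsto v atTop (𝓝 T) →
        Tendsto (fun n => B (v n)) atTop (𝓝 w') → f w' = γ T := by
      intro v w' hv hvt hBv
      have h1 : Tendsto (fun n => f (B (v n))) atTop (𝓝 (f w')) :=
        (hf.continuous.tendsto w').comp hBv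
      have h2 : Tendsto (fun n => f (B (v n))) atTop (𝓝 (γ T)) := by
        apply (htendIci v hv hvt).congr
        intro n
        exact (hBlift (v n) (hv n).1 (hv n).2).symm
      exact tendsto_nhds_unique h1 h2
    have hfw : f w = γ T := hflim (fun n => t (ψ n)) w (fun n => (ht (ψ n)).1)
      (httend.comp hψ.tendsto_atTop) hconv
    have hwd : deriv f w ≠ 0 := hnc w T hT hfw
    obtain ⟨r, hr, hinj⟩ := exists_injOn_ball hf hwd
    have hBw : Tendsto B (𝓝[Ico 0 T] T) (𝓝 w) := by
      by_contra hBw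
      rw [Metric.tendsto_nhds] at hBw
      push_neg at hBw
      obtain ⟨ε, hε, hfar⟩ := hBw
      simp only [← not_lt] at hfar
      set ε0 := min ε r with hε0def
      have hε0 : 0 < ε0 := lt_min hε hr
      have hfar0 : ∃ᶠ x in 𝓝[Ico 0 T] T, ε0 ≤ dist (B x) w := by
        apply hfar.mono
        intro x hx
        exact le_trans (min_le_left _ _) (not_lt.1 hx)
      obtain ⟨a, ha, hat⟩ := seq_of_frequently hfar0
      have hdist0 : Tendsto (fun n => dist (B (t (ψ n))) w) atTop (𝓝 0) :=
        tendsto_iff_dist_tendsto_zero.1 hconv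
      have hpick : ∀ n : ℕ, ∃ k, dist (B (t (ψ k))) w < ε0/2 ∧ dist (t (ψ k)) T < 1/(n+1) := by
        intro n
        have h1 : ∀ᶠ k in atTop, dist (B (t (ψ k))) w < ε0/2 :=
          hdist0.eventually (Iio_mem_nhds (by positivity))
        have h2 : ∀ᶠ k in atTop, dist (t (ψ k)) T < 1/(n+1) := by
          have h3 := httend.comp hψ.tendsto_atTop
          rw [Metric.tendsto_nhds] at h3
          exact h3 _ (by positivity)
        exact ((h1.and h2).exists)
      choose k hk1 hk2 using hpick
      set cseq : ℕ → ℝ := fun n => t (ψ (k n)) with hcseqdef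
      have hcmem : ∀ n, cseq n ∈ Ico 0 T := fun n => (ht (ψ (k n))).1
      have hct : Tendsto cseq atTop (𝓝 T) := by
        rw [tendsto_iff_dist_tendsto_zero]
        apply squeeze_zero (fun n => dist_nonneg) (fun n => le_of_lt (hk2 n))
        exact tendsto_one_div_add_atTop_nhds_zero_nat
      have hd : ContinuousOn (fun u => dist (B u) w) (Ico 0 T) :=
        (continuous_id.dist continuous_const).comp_continuousOn hBc
      have hsub : ∀ n : ℕ, uIcc (cseq n) (a n) ⊆ Ico 0 T := fun n =>
        (Set.ordConnected_Ico).uIcc_subset (hcmem n) (ha n).1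
      have hivt : ∀ n : ℕ, ∃ x ∈ uIcc (cseq n) (a n), dist (B x) w = ε0/2 := by
        intro n
        have hmem : ε0/2 ∈ uIcc (dist (B (cseq n)) w) (dist (B (a n)) w) := by
          rw [mem_uIcc]
          left
          constructor
          · linarith [hk1 n]
          · linarith [(ha n).2]
        obtain ⟨x, hx1, hx2⟩ := intermediate_value_uIcc (hd.mono (hsub n)) hmem
        exact ⟨x, hx1, hx2⟩
      choose v hv1 hv2 using hivt
      have hvmem : ∀ n, v n ∈ Ico 0 T := fun n => hsub n (hv1 n)
      have hvt : Tendsto v atTop (𝓝 T) := by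
        have hmin : Tendsto (fun n => min (cseq n) (a n)) atTop (𝓝 T) := by
          have := hct.min hat
          simpa using this
        apply tendsto_of_tendsto_of_tendsto_of_le_of_le hmin tendsto_const_nhds
        · intro n
          exact (hv1 n).1
        · intro n
          exact le_of_lt (hvmem n).2
      have hvball : ∀ n, B (v n) ∈ Metric.closedBall w (ε0/2) := by
        intro n
        rw [Metric.mem_closedBall]
        exact le_of_eq (hv2 n)
      obtain ⟨w', hw', ψ2, hψ2, hconv2⟩ := (isCompact_closedBall w (ε0/2)).tendsto_subseq hvball
      have hdistw' : dist w' w = ε0/2 := by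
        have h1 : Tendsto (fun n => dist (B (v (ψ2 n))) w) atTop (𝓝 (dist w' w)) :=
          ((continuous_id.dist continuous_const).tendsto w').comp hconv2
        have h2 : Tendsto (fun n => dist (B (v (ψ2 n))) w) atTop (𝓝 (ε0/2)) := by
          have : (fun n => dist (B (v (ψ2 n))) w) = fun _ => ε0/2 := funext fun n => hv2 (ψ2 n)
          rw [this]
          exact tendsto_const_nhds
        exact tendsto_nhds_unique h1 h2
      have hfw' : f w' = γ T := hflim (fun n => v (ψ2 n)) w' (fun n => hvmem (ψ2 n))
        (hvt.comp hψ2.tendsto_atTop) hconv2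
      have hballw' : w' ∈ Metric.ball w r := by
        rw [Metric.mem_ball, hdistw']
        have h1 : ε0 ≤ r := min_le_right ε r
        linarith
      have heq : w' = w := hinj hballw' (Metric.mem_ball_self hr) (by rw [hfw', hfw])
      rw [heq, dist_self] at hdistw'
      linarith
    refine ⟨fun u => if u < T then B u else w, ?_, ?_, ?_⟩
    · intro u hu
      rcases lt_or_eq_of_le hu.2 with h | h
      · have hmem' : Ico 0 T ∈ 𝓝[Icc 0 T] u := by
          apply mem_nhdsWithin.2 ⟨Iio T, isOpen_Iio, h, ?_⟩
          rintro x ⟨hx1, hx2⟩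
          exact ⟨hx2.1, hx1⟩
        have hB' : ContinuousWithinAt B (Icc 0 T) u :=
          (hBc u ⟨hu.1, h⟩).mono_of_mem_nhdsWithin hmem'
        apply hB'.congr_of_eventuallyEq
        · filter_upwards [hmem'] with x hx
          simp [if_pos hx.2]
        · simp [if_pos h]
      · subst h
        unfold ContinuousWithinAt
        have hval : (fun x => if x < u then B x else w) u = w := by simp
        rw [hval]
        have hsplit : Icc (0:ℝ) u = Ico 0 u ∪ {u} := (Ico_union_right (le_of_lt hT)).symm
        rw [hsplit, nhdsWithin_union, nhdsWithin_singleton, tendsto_sup]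
        constructor
        · apply hBw.congr'
          filter_upwards [self_mem_nhdsWithin] with x hx
          simp [if_pos hx.2]
        · rw [tendsto_pure_left]
          intro s hs
          simpa using mem_of_mem_nhds hs
    · have h0T : (0:ℝ) < T := hT
      simp only [if_pos h0T]
      exact hB0
    · intro u hu
      rcases lt_or_eq_of_le hu.2 with h | h
      · show f (if u < T then B u else w) = γ u
        rw [if_pos h]
        exact hBlift u hu.1 h
      · rw [h]
        show f (if T < T then B T else w) = γ T
        rw [if_neg (lt_irrefl _)]
        exact hfw

lemma exists_global_lift {f : ℂ → ℂ} {γ : ℝ → ℂ} {z0 : ℂ} (hf : Differentiable ℂ f)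
    (hγc : ContinuousOn γ (Ici 0)) (hγ0 : γ 0 = z0) (hfz0 : f z0 = z0)
    (hz0d : deriv f z0 ≠ 0)
    (hnc : ∀ w t, 0 < t → f w = γ t → deriv f w ≠ 0)
    (hnoasym : ∀ t, 0 < t → ¬ IsAsymptoticValue f (γ t)) :
    ∃ β : ℝ → ℂ, ContinuousOn β (Ici 0) ∧ β 0 = z0 ∧ ∀ t, 0 ≤ t → f (β t) = γ t := by
  classical
  set P : ℝ → Prop := fun T =>
    ∃ b : ℝ → ℂ, ContinuousOn b (Icc 0 T) ∧ b 0 = z0 ∧ ∀ t ∈ Icc 0 T, f (b t) = γ t with hPdef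
  have hP0 : P 0 := by
    refine ⟨fun _ => z0, continuousOn_const, rfl, ?_⟩
    intro t ht
    have : t = 0 := le_antisymm ht.2 ht.1
    rw [this, hγ0, hfz0]
  have hmono : ∀ T T' : ℝ, 0 ≤ T' → T' ≤ T → P T → P T' := by
    rintro T T' h0 hle ⟨b, hb1, hb2, hb3⟩
    exact ⟨b, hb1.mono (Icc_subset_Icc_right hle), hb2,
      fun t ht => hb3 t (Icc_subset_Icc_right hle ht)⟩
  have hext : ∀ T : ℝ, 0 ≤ T → P T → ∃ δ > 0, P (T + δ) := by
    rintro T hT ⟨b, hb1, hb2, hb3⟩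
    have hd : deriv f (b T) ≠ 0 :=
      deriv_ne_on_lift hz0d hnc hb2 hb3 T ⟨hT, le_refl T⟩
    obtain ⟨δ, hδ, b', hb'1, hb'2, hb'3⟩ := lift_extend' hf hγc hT hb1 hb3 hd
    have hb'0 : b' 0 = z0 := by rw [hb'2 0 ⟨le_refl 0, hT⟩, hb2]
    exact ⟨δ, hδ, b', hb'1, hb'0, hb'3⟩
  have hallP : ∀ T : ℝ, 0 ≤ T → P T := by
    by_contra hcon
    push_neg at hcon
    obtain ⟨T0, hT0, hnP⟩ := hcon
    set A : Set ℝ := {T | 0 ≤ T ∧ P T} with hAdef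
    have hA0 : (0:ℝ) ∈ A := ⟨le_refl 0, hP0⟩
    have hAne : A.Nonempty := ⟨0, hA0⟩
    have hbdd : BddAbove A := by
      refine ⟨T0, fun a ha => ?_⟩
      by_contra hlt
      push_neg at hlt
      exact hnP (hmono a T0 hT0 (le_of_lt hlt) ha.2)
    set Ts := sSup A with hTs
    obtain ⟨δ0, hδ0, hPδ0⟩ := hext 0 (le_refl 0) hP0
    have hTspos : 0 < Ts := by
      have : (0:ℝ) + δ0 ∈ A := ⟨by linarith, hPδ0⟩
      have h1 := le_csSup hbdd this
      linarith
    have hPTs : P Ts := by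
      apply lift_limit hf hγc hz0d hnc hnoasym hTspos
      intro s hs hsT
      obtain ⟨a, haA, hsa⟩ := exists_lt_of_lt_csSup hAne hsT
      exact hmono a s hs (le_of_lt hsa) haA.2
    obtain ⟨δ, hδ, hPTδ⟩ := hext Ts (le_of_lt hTspos) hPTs
    have : Ts + δ ∈ A := ⟨by linarith, hPTδ⟩
    have := le_csSup hbdd this
    linarith
  -- choose a coherent family and glue
  have hallP' : ∀ T : ℝ, ∃ b : ℝ → ℂ, 0 ≤ T →
      ContinuousOn b (Icc 0 T) ∧ b 0 = z0 ∧ ∀ t ∈ Icc 0 T, f (b t) = γ t := by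
    intro T
    by_cases h : 0 ≤ T
    · obtain ⟨b, hb⟩ := hallP T h
      exact ⟨b, fun _ => hb⟩
    · exact ⟨fun _ => z0, fun hc => absurd hc h⟩
  choose L hL using hallP'
  have hcoh : ∀ s s' : ℝ, 0 ≤ s → s ≤ s' → ∀ t ∈ Icc 0 s, L s' t = L s t := by
    intro s s' hs hss' t ht
    have h1 := hL s hs
    have h2 := hL s' (le_trans hs hss')
    exact lift_unique hf isPreconnected_Icc
      (h2.1.mono (Icc_subset_Icc_right hss')) h1.1
      (fun u hu => h2.2.2 u (Icc_subset_Icc_right hss' hu)) h1.2.2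
      (deriv_ne_on_lift hz0d hnc h2.2.1
        (fun v hv => h2.2.2 v (Icc_subset_Icc_right hss' hv)))
      (show (0:ℝ) ∈ Icc 0 s from ⟨le_refl 0, hs⟩) (by rw [h1.2.1, h2.2.1]) t ht
  set β : ℝ → ℂ := fun t => L t t with hβdef
  have hβeq : ∀ s, 0 ≤ s → ∀ t ∈ Icc 0 s, β t = L s t := by
    intro s hs t ht
    exact (hcoh t s ht.1 ht.2 t ⟨ht.1, le_refl t⟩).symm
  refine ⟨β, ?_, ?_, ?_⟩
  · intro t0 ht0
    set s := t0 + 1 with hsdef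
    have hts : t0 < s := by rw [hsdef]; linarith
    have hs0 : 0 ≤ s := le_trans ht0 (le_of_lt hts)
    have hmem' : Icc 0 s ∈ 𝓝[Ici 0] t0 := by
      apply mem_nhdsWithin.2 ⟨Iio s, isOpen_Iio, hts, ?_⟩
      rintro u ⟨hu1, hu2⟩
      exact ⟨hu2, le_of_lt hu1⟩
    have hLc : ContinuousWithinAt (L s) (Ici 0) t0 :=
      ((hL s hs0).1 t0 ⟨ht0, le_of_lt hts⟩).mono_of_mem_nhdsWithin hmem'
    apply hLc.congr_of_eventuallyEq
    · filter_upwards [hmem'] with u hu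
      exact hβeq s hs0 u hu
    · exact hβeq s hs0 t0 ⟨ht0, le_of_lt hts⟩
  · exact (hL 0 (le_refl 0)).2.1
  · intro t ht
    exact (hL t ht).2.2 t ⟨ht, le_refl t⟩

/-- Every leg has exactly one pullback leg under `f` (so the leg map
is well defined): there is a leg `β` with `f ∘ β = γ` on `[0,∞)`, unique as a curve
on `[0,∞)`. -/
theorem leg_map_well_defined
    (f : ℂ → ℂ) (hf : EntireTranscendental f) (z0 : ℂ)
    (hz : RepellingOrParabolicFixedPt f z0) (U : Set ℂ)
    (hU : IsAdmissibleExpansionDomain f z0 U)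
    (γ : ℝ → ℂ) (hγ : IsLeg z0 U γ) :
    ∃ β : ℝ → ℂ, (IsLeg z0 U β ∧ ∀ t ∈ Ici (0:ℝ), f (β t) = γ t) ∧
      ∀ β' : ℝ → ℂ, (IsLeg z0 U β' ∧ ∀ t ∈ Ici (0:ℝ), f (β' t) = γ t) →
        ∀ t ∈ Ici (0:ℝ), β' t = β t := by
  obtain ⟨hfd, -⟩ := hf
  obtain ⟨hfz0, hz⟩ := hz
  obtain ⟨hγc, hγinj, hγ0, hγU, hγtop⟩ := hγ
  have hz0d : deriv f z0 ≠ 0 := by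
    rcases hz with h | ⟨k, hk, hpow⟩
    · intro h0
      rw [h0] at h
      simp at h
      linarith
    · intro h0
      rw [h0, zero_pow (by omega)] at hpow
      exact zero_ne_one hpow
  have hPU : ∀ t : ℝ, 0 < t → γ t ∉ postsingularSet f := by
    intro t ht hmem
    exact hU.2.2.1 (hγU t ht) (Or.inl hmem)
  have hSP : singularValues f ⊆ postsingularSet f := by
    intro x hx
    apply subset_closure
    refine mem_iUnion.2 ⟨0, ?_⟩
    simpa using hx
  have hnc : ∀ w t, 0 < t → f w = γ t → deriv f w ≠ 0 := by
    intro w t ht hfw h0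
    exact hPU t ht (hSP (subset_closure (Or.inl ⟨w, h0, hfw⟩)))
  have hnoasym : ∀ t : ℝ, 0 < t → ¬ IsAsymptoticValue f (γ t) := by
    intro t ht ha
    exact hPU t ht (hSP (subset_closure (Or.inr ha)))
  obtain ⟨β, hβc, hβ0, hβlift⟩ := exists_global_lift hfd hγc hγ0 hfz0 hz0d hnc hnoasym
  have hpre : f ⁻¹' U ⊆ U := hU.2.2.2.2.1.subset
  have hβU : ∀ t : ℝ, 0 < t → β t ∈ U := by
    intro t ht
    apply hpre
    rw [mem_preimage, hβlift t (le_of_lt ht)]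
    exact hγU t ht
  have hβtend : Tendsto (fun t => ‖β t‖) atTop atTop := by
    rw [tendsto_atTop]
    intro M
    set M' : ℝ := |M| + 1 with hM'def
    have hM'0 : 0 ≤ M' := by positivity
    obtain ⟨zc, hzc, hCb'⟩ := (isCompact_closedBall (0:ℂ) M').exists_isMaxOn
      ⟨0, Metric.mem_closedBall_self hM'0⟩
      ((continuous_norm.comp hfd.continuous).continuousOn)
    have hCb : ∀ y ∈ Metric.closedBall (0:ℂ) M',
        ‖f y‖ ≤ ‖f zc‖ := fun y hy => hCb' hy
    set C := ‖f zc‖ with hC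
    have hγev : ∀ᶠ t in atTop, C + 1 ≤ ‖γ t‖ := tendsto_atTop.1 hγtop (C + 1)
    filter_upwards [hγev, eventually_ge_atTop (0:ℝ)] with t h1 h2
    by_contra hlt
    push_neg at hlt
    have hmem : β t ∈ Metric.closedBall (0:ℂ) M' := by
      rw [Metric.mem_closedBall, dist_zero_right]
      have := le_abs_self M
      linarith
    have h3 : ‖f (β t)‖ ≤ C := hCb (β t) hmem
    rw [hβlift t h2] at h3
    linarith
  have hβinj : InjOn β (Ici 0) := by
    intro s hs t ht h
    apply hγinj hs ht
    rw [← hβlift s hs, ← hβlift t ht, h]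
  have hβnc : ∀ t ∈ Ici (0:ℝ), deriv f (β t) ≠ 0 := by
    intro t ht
    rcases eq_or_lt_of_le (show (0:ℝ) ≤ t from ht) with h | h
    · rw [← h, hβ0]; exact hz0d
    · exact hnc (β t) t h (hβlift t ht)
  refine ⟨β, ⟨⟨hβc, hβinj, hβ0, hβU, hβtend⟩, fun t ht => hβlift t ht⟩, ?_⟩
  rintro β' ⟨⟨hβ'c, -, hβ'0, -, -⟩, hβ'lift⟩ t ht
  exact (lift_unique hfd (isPreconnected_Ici) hβc hβ'c
    (fun u hu => hβlift u hu) (fun u hu => hβ'lift u hu) hβnc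
    (show (0:ℝ) ∈ Ici (0:ℝ) from Set.self_mem_Ici) (by rw [hβ0, hβ'0]) t ht).symm
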